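/- Let (Ω, 𝒜, P) be a probability space, X, Y : Ω → ℝ random variables, and φ : [−1,1] → ℝ convex and strictly convex at 0 with φ(0) = 0. Then ∫_{ℝ×ℝ} ∫_ℝ φ(F_{Y|X=x₁}(y) − F_{Y|X=x₂}(y)) dP^Y(y) d(P^X ⊗ P^X)(x₁,x₂) = 0 if and only if X and Y are independent. -/

import Mathlib

open MeasureTheory ProbabilityTheory Filter Set
open scoped ENNReal Topology

/-- Two finite measures on ℝ agreeing on `Iic q` for all rationals `q` are equal. -/
lemma meas_ext_of_rat (ρ σ : Measure ℝ) [IsFiniteMeasure ρ] [IsFiniteMeasure σ]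
    (h : ∀ q : ℚ, ρ (Iic (q : ℝ)) = σ (Iic (q : ℝ))) : ρ = σ := by
  refine Measure.ext_of_Iic ρ σ (fun y => ?_)
  -- choose rationals decreasing to y
  have hq : ∀ n : ℕ, ∃ q : ℚ, y < q ∧ (q : ℝ) < y + 1 / (n + 1) := by
    intro n
    obtain ⟨q, hq1, hq2⟩ := exists_rat_btwn (show y < y + 1 / (n + 1 : ℝ) by
      have : (0:ℝ) < 1 / (n + 1) := by positivity
      linarith)
    exact ⟨q, hq1, hq2⟩
  choose q hq1 hq2 using hq
  have hiInter : ⋂ n : ℕ, Iic ((q n : ℝ)) = Iic y := by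
    ext w
    simp only [mem_iInter, mem_Iic]
    constructor
    · intro hw
      by_contra hyw
      push_neg at hyw
      obtain ⟨n, hn⟩ := exists_nat_one_div_lt (show 0 < w - y by linarith)
      have := hq2 n
      have := hw n
      linarith
    · intro hw n
      exact hw.trans (hq1 n).le
  have hdir : Directed (· ⊇ ·) (fun n : ℕ => Iic ((q n : ℝ))) := by
    intro m n
    rcases le_total (q m) (q n) with h' | h'
    · exact ⟨m, subset_rfl, Iic_subset_Iic.mpr (by exact_mod_cast h')⟩
    · exact ⟨n, Iic_subset_Iic.mpr (by exact_mod_cast h'), subset_rfl⟩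
  have h1 : ρ (Iic y) = ⨅ n, ρ (Iic ((q n : ℝ))) := by
    rw [← hiInter]
    exact Directed.measure_iInter (fun n => measurableSet_Iic.nullMeasurableSet) hdir
      ⟨0, measure_ne_top _ _⟩
  have h2 : σ (Iic y) = ⨅ n, σ (Iic ((q n : ℝ))) := by
    rw [← hiInter]
    exact Directed.measure_iInter (fun n => measurableSet_Iic.nullMeasurableSet) hdir
      ⟨0, measure_ne_top _ _⟩
  rw [h1, h2]
  exact iInf_congr (fun n => h (q n))

/-- If `f p.1 = f p.2` a.e. on a product of a probability measure with itself, then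
`f` is a.e. equal to its integral. -/
lemma ae_eq_integral_of_ae_prod_eq {α : Type*} [MeasurableSpace α] (μ : Measure α)
    [IsProbabilityMeasure μ] {f : α → ℝ}
    (h : ∀ᵐ p ∂(μ.prod μ), f p.1 = f p.2) : ∀ᵐ x ∂μ, f x = ∫ z, f z ∂μ := by
  filter_upwards [Measure.ae_ae_of_ae_prod h] with x hx
  have : ∫ z, f z ∂μ = ∫ _z, f x ∂μ :=
    integral_congr_ae (by filter_upwards [hx] with z hz using hz.symm)
  rw [this, integral_const, probReal_univ, one_smul]


lemma kernel_Iic_ae_eq_of_ae_ae (μ ν : Measure ℝ) [IsProbabilityMeasure μ]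
    [IsProbabilityMeasure ν] (κ : Kernel ℝ ℝ) [IsMarkovKernel κ]
    (hEκ : ∀ B : Set ℝ, MeasurableSet B → ∫⁻ x, κ x B ∂μ = ν B)
    (h : ∀ᵐ y ∂ν, ∀ᵐ x ∂μ, κ x (Iic y) = ν (Iic y)) (y₀ : ℝ) :
    ∀ᵐ x ∂μ, κ x (Iic y₀) = ν (Iic y₀) := by
  classical
  set D : Set ℝ := {y | ∀ᵐ x ∂μ, κ x (Iic y) = ν (Iic y)} with hD
  have hDc : ν Dᶜ = 0 := by
    have h' := h
    rw [ae_iff] at h'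
    simpa [hD, compl_setOf] using h'
  -- vanishing on ν-null sets
  have hF0 : ∀ B : Set ℝ, MeasurableSet B → ν B = 0 → ∀ᵐ x ∂μ, κ x B = 0 := by
    intro B hB hB0
    have : ∫⁻ x, κ x B ∂μ = 0 := by rw [hEκ B hB, hB0]
    exact (lintegral_eq_zero_iff (κ.measurable_coe hB)).mp this
  -- left-limit lemma
  have hleft : ∀ z : ℝ, (∀ ε : ℝ, 0 < ε → (D ∩ Ioo (z - ε) z).Nonempty) →
      ∀ᵐ x ∂μ, κ x (Iio z) = ν (Iio z) := by
    intro z hz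
    have hc : ∀ n : ℕ, ∃ u : ℝ, u ∈ D ∧ u ∈ Ioo (z - 1 / (n + 1)) z := by
      intro n
      obtain ⟨u, hu⟩ := hz (1 / (n + 1)) (by positivity)
      exact ⟨u, hu.1, hu.2⟩
    choose u hu1 hu2 using hc
    have hUnion : ⋃ n : ℕ, Iic (u n) = Iio z := by
      ext w
      simp only [mem_iUnion, mem_Iic, mem_Iio]
      constructor
      · rintro ⟨n, hn⟩
        exact lt_of_le_of_lt hn (hu2 n).2
      · intro hw
        obtain ⟨n, hn⟩ := exists_nat_one_div_lt (show 0 < z - w by linarith)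
        refine ⟨n, ?_⟩
        have := (hu2 n).1
        linarith [this]
    have hdir : Directed (· ⊆ ·) (fun n : ℕ => Iic (u n)) := by
      intro m n
      rcases le_total (u m) (u n) with h' | h'
      · exact ⟨n, Iic_subset_Iic.mpr h', subset_rfl⟩
      · exact ⟨m, subset_rfl, Iic_subset_Iic.mpr h'⟩
    have hae : ∀ᵐ x ∂μ, ∀ n : ℕ, κ x (Iic (u n)) = ν (Iic (u n)) :=
      (ae_all_iff).mpr (fun n => hu1 n)
    filter_upwards [hae] with x hx
    calc κ x (Iio z) = κ x (⋃ n, Iic (u n)) := by rw [hUnion]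
    _ = ⨆ n, κ x (Iic (u n)) := hdir.measure_iUnion
    _ = ⨆ n, ν (Iic (u n)) := by exact iSup_congr hx
    _ = ν (⋃ n, Iic (u n)) := hdir.measure_iUnion.symm
    _ = ν (Iio z) := by rw [hUnion]
  -- Iio to Iic
  have hIioIic : ∀ z : ℝ, (∀ᵐ x ∂μ, κ x (Iio z) = ν (Iio z)) →
      ∀ᵐ x ∂μ, κ x (Iic z) = ν (Iic z) := by
    intro z hz
    by_cases hatom : ν {z} = 0
    · filter_upwards [hz, hF0 {z} (measurableSet_singleton z) hatom] with x hx hx0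
      have hsplit : ∀ ρ : Measure ℝ, ρ (Iic z) = ρ (Iio z) + ρ {z} := by
        intro ρ
        rw [← Iio_union_right, measure_union (by simp) (measurableSet_singleton z)]
      rw [hsplit (κ x), hsplit ν, hx, hx0, hatom]
    · have hzD : z ∈ D := by
        by_contra hzD
        exact hatom (measure_mono_null (singleton_subset_iff.mpr hzD) hDc)
      exact hzD
  -- main case analysis
  by_cases h0 : y₀ ∈ D
  · exact h0
  set S := D ∩ Iic y₀ with hS
  by_cases hSne : S.Nonempty
  · set a := sSup S with ha
    have hbdd : BddAbove S := ⟨y₀, fun w hw => hw.2⟩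
    have haley : a ≤ y₀ := csSup_le hSne (fun w hw => hw.2)
    have good_a : ∀ᵐ x ∂μ, κ x (Iic a) = ν (Iic a) := by
      by_cases haD : a ∈ D
      · exact haD
      · refine hIioIic a (hleft a ?_)
        intro ε hε
        obtain ⟨w, hwS, hw⟩ := exists_lt_of_lt_csSup hSne (show a - ε < a by linarith)
        have hwa : w ≤ a := le_csSup hbdd hwS
        have hwlt : w < a := lt_of_le_of_ne hwa (fun he => haD (he ▸ hwS.1))
        exact ⟨w, hwS.1, hw, hwlt⟩
    have hgap : ν (Ioc a y₀) = 0 := by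
      refine measure_mono_null ?_ hDc
      intro w hw
      intro hwD
      have : w ∈ S := ⟨hwD, hw.2⟩
      exact absurd (le_csSup hbdd this) (not_le.mpr hw.1)
    filter_upwards [good_a, hF0 (Ioc a y₀) measurableSet_Ioc hgap] with x hx hx0
    have hsplit : ∀ ρ : Measure ℝ, ρ (Iic y₀) = ρ (Iic a) + ρ (Ioc a y₀) := by
      intro ρ
      rw [← Iic_union_Ioc_eq_Iic haley,
        measure_union (Iic_disjoint_Ioc le_rfl) measurableSet_Ioc]
    rw [hsplit (κ x), hsplit ν, hx, hx0, hgap]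
  · have hnull : ν (Iic y₀) = 0 := by
      refine measure_mono_null (fun w hw => ?_) hDc
      intro hwD
      exact hSne ⟨w, hwD, hw⟩
    filter_upwards [hF0 (Iic y₀) measurableSet_Iic hnull] with x hx
    rw [hx, hnull]


/-- For φ convex, strictly convex at 0, with φ(0)=0, the sensitivity
functional of conditional distribution functions vanishes iff X and Y are
independent, i.e. iff P^{(X,Y)} = P^X ⊗ P^Y. -/
theorem stmt7 {Ω : Type*} [MeasurableSpace Ω] (P : Measure Ω) [IsProbabilityMeasure P]
    (X Y : Ω → ℝ) (hX : Measurable X) (hY : Measurable Y)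
    (κ : Kernel ℝ ℝ) [IsMarkovKernel κ]
    (hκ : ∀ A B : Set ℝ, MeasurableSet A → MeasurableSet B →
      P.map (fun ω => (X ω, Y ω)) (A ×ˢ B) = ∫⁻ x in A, κ x B ∂(P.map X))
    (φ : ℝ → ℝ) (hφ : ConvexOn ℝ (Set.Icc (-1 : ℝ) 1) φ) (hφ0 : φ 0 = 0)
    (hφstrict : ∀ ε : ℝ, 0 < ε → ε ≤ 1 → φ 0 < (φ (-ε) + φ ε) / 2) :
    ∫ x : ℝ × ℝ, (∫ y, φ ((κ x.1 (Set.Iic y)).toReal - (κ x.2 (Set.Iic y)).toReal)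
            ∂(P.map Y)) ∂((P.map X).prod (P.map X)) = 0 ↔
      P.map (fun ω => (X ω, Y ω)) = (P.map X).prod (P.map Y) := by
  classical
  have hXY : Measurable fun ω => (X ω, Y ω) := hX.prodMk hY
  set μ : Measure ℝ := P.map X with hμdef
  set ν : Measure ℝ := P.map Y with hνdef
  set J : Measure (ℝ × ℝ) := P.map (fun ω => (X ω, Y ω)) with hJdef
  haveI : IsProbabilityMeasure μ := Measure.isProbabilityMeasure_map hX.aemeasurable
  haveI : IsProbabilityMeasure ν := Measure.isProbabilityMeasure_map hY.aemeasurable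
  haveI : IsProbabilityMeasure J := Measure.isProbabilityMeasure_map hXY.aemeasurable
  -- second marginal of J is ν
  have hJ2 : ∀ B : Set ℝ, MeasurableSet B → J (univ ×ˢ B) = ν B := by
    intro B hB
    rw [hJdef, Measure.map_apply hXY (MeasurableSet.univ.prod hB), hνdef,
      Measure.map_apply hY hB]
    congr 1
    ext ω
    simp
  -- averaging identity
  have hEκ : ∀ B : Set ℝ, MeasurableSet B → ∫⁻ x, κ x B ∂μ = ν B := by
    intro B hB
    rw [← setLIntegral_univ, ← hκ univ B MeasurableSet.univ hB]
    exact hJ2 B hB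
  constructor
  · intro hint
    -- measurable modification of φ
    set c : ℝ → ℝ := fun t => if t ≤ 0 then φ (-1) else φ 1 with hcdef
    set ψ : ℝ → ℝ := (Ioo (-1 : ℝ) 1).piecewise φ c with hψdef
    have hψφ : ∀ t ∈ Icc (-1 : ℝ) 1, ψ t = φ t := by
      intro t ht
      by_cases h' : t ∈ Ioo (-1 : ℝ) 1
      · exact piecewise_eq_of_mem _ _ _ h'
      · have ht' : t = -1 ∨ t = 1 := by
          rcases ht with ⟨h1, h2⟩
          rcases eq_or_lt_of_le h1 with he | hlt
          · exact Or.inl he.symm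
          · rcases eq_or_lt_of_le h2 with he | hlt2
            · exact Or.inr he
            · exact absurd ⟨hlt, hlt2⟩ h'
        rcases ht' with rfl | rfl
        · rw [hψdef, piecewise_eq_of_notMem _ _ _ h', hcdef]
          norm_num
        · rw [hψdef, piecewise_eq_of_notMem _ _ _ h', hcdef]
          norm_num
    have hφcont : ContinuousOn φ (Ioo (-1 : ℝ) 1) := by
      have := hφ.continuousOn_interior
      rwa [interior_Icc] at this
    have hccont : ContinuousOn c (Ioo (-1 : ℝ) 1)ᶜ := by
      intro t ht
      have ht0 : t ≠ 0 := by
        intro h0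
        exact ht (by rw [h0]; exact ⟨by norm_num, by norm_num⟩)
      apply ContinuousAt.continuousWithinAt
      rcases lt_or_gt_of_ne ht0 with h' | h'
      · have hev : ∀ᶠ y in 𝓝 t, c y = φ (-1) := by
          filter_upwards [Iio_mem_nhds h'] with y hy
          simp [hcdef, (mem_Iio.mp hy).le]
        exact (continuousAt_congr hev).mpr continuousAt_const
      · have hev : ∀ᶠ y in 𝓝 t, c y = φ 1 := by
          filter_upwards [Ioi_mem_nhds h'] with y hy
          simp [hcdef, not_le.mpr (mem_Ioi.mp hy)]
        exact (continuousAt_congr hev).mpr continuousAt_const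
    have hψm : Measurable ψ :=
      ContinuousOn.measurable_piecewise hφcont hccont measurableSet_Ioo
    -- bounds for φ on [-1,1]
    have hmid : ∀ t ∈ Icc (-1 : ℝ) 1, 0 ≤ φ t + φ (-t) := by
      intro t ht
      have hmt : -t ∈ Icc (-1 : ℝ) 1 := by
        rcases ht with ⟨h1, h2⟩
        exact ⟨by linarith, by linarith⟩
      have h2 := hφ.2 ht hmt (by norm_num : (0:ℝ) ≤ 1/2) (by norm_num : (0:ℝ) ≤ 1/2)
        (by norm_num)
      have heq : (1/2 : ℝ) • t + (1/2 : ℝ) • (-t) = 0 := by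
        simp [smul_eq_mul]
      rw [heq, hφ0] at h2
      simp only [smul_eq_mul] at h2
      linarith
    have hup : ∀ t ∈ Icc (-1 : ℝ) 1, φ t ≤ max (φ (-1)) (φ 1) := by
      intro t ht
      refine hφ.le_on_segment ⟨le_refl _, by norm_num⟩ ⟨by norm_num, le_refl _⟩ ?_
      rwa [segment_eq_Icc (by norm_num : (-1 : ℝ) ≤ 1)]
    set M : ℝ := max (φ (-1)) (φ 1) with hM
    have habs : ∀ t ∈ Icc (-1 : ℝ) 1, |φ t| ≤ M := by
      intro t ht
      have hmt : -t ∈ Icc (-1 : ℝ) 1 := by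
        rcases ht with ⟨h1, h2⟩
        exact ⟨by linarith, by linarith⟩
      have h1 := hup t ht
      have h2 := hmid t ht
      have h3 := hup (-t) hmt
      rw [abs_le]
      exact ⟨by linarith, by linarith⟩
    -- joint measurability of the conditional CDF
    have htset : MeasurableSet {q : (ℝ × ℝ) × ℝ | q.2 ≤ q.1.2} :=
      measurableSet_le measurable_snd measurable_fst.snd
    have hGm' : Measurable fun p : ℝ × ℝ => κ p.1 (Iic p.2) := by
      set κ' : Kernel (ℝ × ℝ) ℝ := κ.comap Prod.fst measurable_fst with hκ'def
      haveI : IsSFiniteKernel κ' := by rw [hκ'def]; infer_instance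
      have h := Kernel.measurable_kernel_prodMk_left (κ := κ') htset
      have heq : (fun p : ℝ × ℝ => κ' p
          (Prod.mk p ⁻¹' {q : (ℝ × ℝ) × ℝ | q.2 ≤ q.1.2}))
          = fun p : ℝ × ℝ => κ p.1 (Iic p.2) := by
        funext p
        rw [hκ'def, Kernel.comap_apply]
        congr 1
      rwa [heq] at h
    set G : ℝ × ℝ → ℝ := fun p => (κ p.1 (Iic p.2)).toReal with hGdef
    have hGm : Measurable G := hGm'.ennreal_toReal
    have hG01 : ∀ p : ℝ × ℝ, G p ∈ Icc (0 : ℝ) 1 := by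
      intro p
      refine ⟨ENNReal.toReal_nonneg, ?_⟩
      have h1 : κ p.1 (Iic p.2) ≤ 1 := prob_le_one
      have := ENNReal.toReal_mono ENNReal.one_ne_top h1
      simpa using this
    have hΔ : ∀ (p : ℝ × ℝ) (y : ℝ), G (p.1, y) - G (p.2, y) ∈ Icc (-1 : ℝ) 1 := by
      intro p y
      obtain ⟨a1, b1⟩ := hG01 (p.1, y)
      obtain ⟨a2, b2⟩ := hG01 (p.2, y)
      exact ⟨by linarith, by linarith⟩
    have hΔ' : ∀ (p : ℝ × ℝ) (y : ℝ), G (p.2, y) - G (p.1, y) ∈ Icc (-1 : ℝ) 1 :=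
      fun p y => hΔ (Prod.swap p) y
    -- rewrite the hypothesis with ψ
    set g : ℝ × ℝ → ℝ := fun p => ∫ y, ψ (G (p.1, y) - G (p.2, y)) ∂ν with hgdef
    have hint' : ∫ p, g p ∂(μ.prod μ) = 0 := by
      rw [← hint]
      refine integral_congr_ae (ae_of_all _ (fun p => ?_))
      refine integral_congr_ae (ae_of_all _ (fun y => ?_))
      exact hψφ _ (hΔ p y)
    -- measurability and integrability
    have hFm : Measurable fun q : (ℝ × ℝ) × ℝ => ψ (G (q.1.1, q.2) - G (q.1.2, q.2)) :=
      hψm.comp ((hGm.comp (measurable_fst.fst.prodMk measurable_snd)).sub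
        (hGm.comp (measurable_fst.snd.prodMk measurable_snd)))
    have hFbound : ∀ q : (ℝ × ℝ) × ℝ, |ψ (G (q.1.1, q.2) - G (q.1.2, q.2))| ≤ M := by
      intro q
      rw [hψφ _ (hΔ q.1 q.2)]
      exact habs _ (hΔ q.1 q.2)
    have hInner_int : ∀ p : ℝ × ℝ, Integrable (fun y => ψ (G (p.1, y) - G (p.2, y))) ν := by
      intro p
      refine Integrable.mono' (integrable_const M)
        ((hFm.comp (measurable_prodMk_left (x := p))).aestronglyMeasurable)
        (ae_of_all _ (fun y => ?_))
      rw [Real.norm_eq_abs]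
      exact hFbound (p, y)
    have hg_meas : StronglyMeasurable g := hFm.stronglyMeasurable.integral_prod_right'
    have hg_bound : ∀ p, ‖g p‖ ≤ M := by
      intro p
      calc ‖g p‖ ≤ M * (ν univ).toReal := by
            refine norm_integral_le_of_norm_le_const (ae_of_all _ (fun y => ?_))
            rw [Real.norm_eq_abs]
            exact hFbound (p, y)
      _ = M := by simp
    have hg_int : Integrable g (μ.prod μ) :=
      Integrable.mono' (integrable_const M) hg_meas.aestronglyMeasurable
        (ae_of_all _ hg_bound)
    have hmp : MeasurePreserving (Prod.swap : ℝ × ℝ → ℝ × ℝ) (μ.prod μ) (μ.prod μ) :=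
      Measure.measurePreserving_swap
    have hswap_int : Integrable (fun p => g (Prod.swap p)) (μ.prod μ) :=
      hmp.integrable_comp_emb (MeasurableEquiv.prodComm : ℝ × ℝ ≃ᵐ ℝ × ℝ).measurableEmbedding
        |>.mpr hg_int
    have hswap0 : ∫ p, g (Prod.swap p) ∂(μ.prod μ) = 0 := by
      rw [← hint']
      exact hmp.integral_comp (MeasurableEquiv.prodComm : ℝ × ℝ ≃ᵐ ℝ × ℝ).measurableEmbedding g
    -- symmetrization
    have hgs_int : Integrable (fun p => g p + g (Prod.swap p)) (μ.prod μ) :=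
      hg_int.add hswap_int
    have hgs0 : ∫ p, (g p + g (Prod.swap p)) ∂(μ.prod μ) = 0 := by
      rw [integral_add hg_int hswap_int, hint', hswap0, add_zero]
    have hsum_eq : ∀ p : ℝ × ℝ, g p + g (Prod.swap p)
        = ∫ y, (ψ (G (p.1, y) - G (p.2, y)) + ψ (G (p.2, y) - G (p.1, y))) ∂ν := by
      intro p
      have h2 : Integrable (fun y => ψ (G (p.2, y) - G (p.1, y))) ν := hInner_int (Prod.swap p)
      rw [integral_add (hInner_int p) h2]
      rfl
    have hsum_nonneg : ∀ (p : ℝ × ℝ) (y : ℝ),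
        0 ≤ ψ (G (p.1, y) - G (p.2, y)) + ψ (G (p.2, y) - G (p.1, y)) := by
      intro p y
      have h1 := hΔ p y
      have h2 := hΔ' p y
      rw [hψφ _ h1, hψφ _ h2]
      have hneg : G (p.2, y) - G (p.1, y) = -(G (p.1, y) - G (p.2, y)) := by ring
      rw [hneg]
      exact hmid _ h1
    have hgs_nonneg : ∀ p, 0 ≤ g p + g (Prod.swap p) := by
      intro p
      rw [hsum_eq p]
      exact integral_nonneg (hsum_nonneg p)
    have hgs_ae0 : (fun p => g p + g (Prod.swap p)) =ᵐ[μ.prod μ] 0 :=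
      (integral_eq_zero_iff_of_nonneg hgs_nonneg hgs_int).mp hgs0
    -- inner a.e. equality
    have hae_pair : ∀ᵐ p ∂(μ.prod μ), ∀ᵐ y ∂ν, G (p.1, y) = G (p.2, y) := by
      filter_upwards [hgs_ae0] with p hp
      have hsum0 : ∫ y, (ψ (G (p.1, y) - G (p.2, y)) + ψ (G (p.2, y) - G (p.1, y))) ∂ν
          = 0 := by
        rw [← hsum_eq p]
        exact hp
      have h0 : (fun y => ψ (G (p.1, y) - G (p.2, y)) + ψ (G (p.2, y) - G (p.1, y)))
          =ᵐ[ν] 0 :=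
        (integral_eq_zero_iff_of_nonneg (hsum_nonneg p)
          ((hInner_int p).add (hInner_int (Prod.swap p)))).mp hsum0
      filter_upwards [h0] with y hy
      by_contra hne
      have hd0 : G (p.1, y) - G (p.2, y) ≠ 0 := sub_ne_zero.mpr hne
      have hdIcc := hΔ p y
      have hd1 : |G (p.1, y) - G (p.2, y)| ≤ 1 := abs_le.mpr ⟨hdIcc.1, hdIcc.2⟩
      have hstrict := hφstrict _ (abs_pos.mpr hd0) hd1
      rw [hφ0] at hstrict
      have hy' : φ (G (p.1, y) - G (p.2, y)) + φ (G (p.2, y) - G (p.1, y)) = 0 := by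
        have := hy
        simp only [Pi.zero_apply] at this
        rwa [hψφ _ (hΔ p y), hψφ _ (hΔ' p y)] at this
      have hrw : φ (-|G (p.1, y) - G (p.2, y)|) + φ (|G (p.1, y) - G (p.2, y)|)
          = φ (G (p.1, y) - G (p.2, y)) + φ (G (p.2, y) - G (p.1, y)) := by
        rcases abs_cases (G (p.1, y) - G (p.2, y)) with ⟨h1, _⟩ | ⟨h1, _⟩
        · rw [h1]
          have : G (p.2, y) - G (p.1, y) = -(G (p.1, y) - G (p.2, y)) := by ring
          rw [this, add_comm]
        · rw [h1]
          have : G (p.2, y) - G (p.1, y) = -(G (p.1, y) - G (p.2, y)) := by ring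
          rw [this, neg_neg]
      rw [hrw, hy'] at hstrict
      norm_num at hstrict
    -- swap quantifier order
    have hNmeas : MeasurableSet {q : (ℝ × ℝ) × ℝ | G (q.1.1, q.2) = G (q.1.2, q.2)} :=
      measurableSet_eq_fun (hGm.comp (measurable_fst.fst.prodMk measurable_snd))
        (hGm.comp (measurable_fst.snd.prodMk measurable_snd))
    have hprodN : ∀ᵐ q ∂((μ.prod μ).prod ν), G (q.1.1, q.2) = G (q.1.2, q.2) :=
      (Measure.ae_prod_iff_ae_ae hNmeas).mpr hae_pair
    have hSmeas : MeasurableSet {w : ℝ × (ℝ × ℝ) | G (w.2.1, w.1) = G (w.2.2, w.1)} :=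
      measurableSet_eq_fun (hGm.comp (measurable_snd.fst.prodMk measurable_fst))
        (hGm.comp (measurable_snd.snd.prodMk measurable_fst))
    have hswapN : ∀ᵐ w ∂(ν.prod (μ.prod μ)), G (w.2.1, w.1) = G (w.2.2, w.1) := by
      rw [← Measure.prod_swap]
      refine (ae_map_iff measurable_swap.aemeasurable hSmeas).mpr ?_
      exact hprodN
    have hDae2 : ∀ᵐ y ∂ν, ∀ᵐ x ∂μ, κ x (Iic y) = ν (Iic y) := by
      filter_upwards [Measure.ae_ae_of_ae_prod hswapN] with y hy
      have h2 := ae_eq_integral_of_ae_prod_eq μ (f := fun x => G (x, y)) hy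
      have h3 : ∫ z, G (z, y) ∂μ = (ν (Iic y)).toReal := by
        rw [hGdef]
        simp only
        rw [integral_toReal ((κ.measurable_coe measurableSet_Iic).aemeasurable)
          (ae_of_all _ (fun x => measure_lt_top (κ x) _)), hEκ (Iic y) measurableSet_Iic]
      filter_upwards [h2] with x hx
      rw [h3] at hx
      exact (ENNReal.toReal_eq_toReal_iff' (measure_ne_top _ _) (measure_ne_top _ _)).mp hx
    have hfinal : ∀ y₀ : ℝ, ∀ᵐ x ∂μ, κ x (Iic y₀) = ν (Iic y₀) :=
      kernel_Iic_ae_eq_of_ae_ae μ ν κ hEκ hDae2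
    -- conclude that the joint law is the product
    refine (Measure.prod_eq (fun s t hs ht => ?_)).symm
    have key : ∀ y : ℝ, J (s ×ˢ Iic y) = μ s * ν (Iic y) := by
      intro y
      rw [hκ s (Iic y) hs measurableSet_Iic]
      have : ∫⁻ x in s, κ x (Iic y) ∂μ = ∫⁻ _x in s, ν (Iic y) ∂μ := by
        refine lintegral_congr_ae (ae_restrict_of_ae ?_)
        filter_upwards [hfinal y] with x hx
        rw [hx]
      rw [this, setLIntegral_const, mul_comm]
    set ρ1 : Measure ℝ := (J.restrict (s ×ˢ univ)).map Prod.snd with hρ1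
    have hρ1app : ∀ u : Set ℝ, MeasurableSet u → ρ1 u = J (s ×ˢ u) := by
      intro u hu
      rw [hρ1, Measure.map_apply measurable_snd hu,
        Measure.restrict_apply (measurable_snd hu)]
      congr 1
      ext p
      simp only [mem_inter_iff, mem_preimage, mem_prod, mem_univ, and_true]
      tauto
    haveI : IsFiniteMeasure ρ1 := ⟨by
      rw [hρ1app univ MeasurableSet.univ]
      exact measure_lt_top J _⟩
    set ρ2 : Measure ℝ := μ s • ν with hρ2
    haveI : IsFiniteMeasure ρ2 := ⟨by
      rw [hρ2]
      simp only [Measure.smul_apply, smul_eq_mul]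
      exact ENNReal.mul_lt_top (measure_lt_top μ _) (measure_lt_top ν _)⟩
    have hρeq : ρ1 = ρ2 := by
      refine Measure.ext_of_Iic ρ1 ρ2 (fun y => ?_)
      rw [hρ1app _ measurableSet_Iic, key y, hρ2]
      simp [Measure.smul_apply, smul_eq_mul]
    calc J (s ×ˢ t) = ρ1 t := (hρ1app t ht).symm
    _ = ρ2 t := by rw [hρeq]
    _ = μ s * ν t := by simp [hρ2, Measure.smul_apply, smul_eq_mul]
  · -- independence implies the integral vanishes
    intro hindep
    have hQ : ∀ q : ℚ, ∀ᵐ x ∂μ, κ x (Iic (q : ℝ)) = ν (Iic (q : ℝ)) := by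
      intro q
      refine ae_eq_of_forall_setLIntegral_eq_of_sigmaFinite
        (κ.measurable_coe measurableSet_Iic) measurable_const (fun s hs _ => ?_)
      rw [← hκ s (Iic (q : ℝ)) hs measurableSet_Iic, hindep,
        Measure.prod_prod, setLIntegral_const, mul_comm]
    have hAll : ∀ᵐ x ∂μ, κ x = ν := by
      have := ae_all_iff.mpr hQ
      filter_upwards [this] with x hx
      exact meas_ext_of_rat (κ x) ν hx
    have h1 : ∀ᵐ p ∂(μ.prod μ), κ p.1 = ν := by
      refine ae_of_ae_map (f := (Prod.fst : ℝ × ℝ → ℝ)) (μ := μ.prod μ) (p := fun z => κ z = ν) measurable_fst.aemeasurable ?_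
      rwa [Measure.map_fst_prod, measure_univ, one_smul]
    have h2 : ∀ᵐ p ∂(μ.prod μ), κ p.2 = ν := by
      refine ae_of_ae_map (f := (Prod.snd : ℝ × ℝ → ℝ)) (μ := μ.prod μ) (p := fun z => κ z = ν) measurable_snd.aemeasurable ?_
      rwa [Measure.map_snd_prod, measure_univ, one_smul]
    calc ∫ x : ℝ × ℝ, (∫ y, φ ((κ x.1 (Set.Iic y)).toReal - (κ x.2 (Set.Iic y)).toReal)
            ∂ν) ∂(μ.prod μ)
        = ∫ _x : ℝ × ℝ, (0 : ℝ) ∂(μ.prod μ) := by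
          refine integral_congr_ae ?_
          filter_upwards [h1, h2] with p hp1 hp2
          rw [hp1, hp2]
          simp [hφ0]
      _ = 0 := integral_zero _ _
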